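/- A signed graph Σ = (G, σ) whose underlying simple graph G is connected and bipartite is distance-compatible if and only if it is balanced. -/

import Mathlib

open SimpleGraph

/-- The sign (product of edge signs) of a walk in a graph, computed along its darts. -/
def walkSign {V : Type*} {G : SimpleGraph V} (σ : V → V → ℤ) {u v : V} (p : G.Walk u v) : ℤ :=
  (p.darts.map fun d => σ d.toProd.1 d.toProd.2).prod

/-- `σ` is a signature on `G`: a symmetric function that is `±1`-valued on edges. -/
def IsSignature {V : Type*} (G : SimpleGraph V) (σ : V → V → ℤ) : Prop :=
  (∀ u v, σ u v = σ v u) ∧ ∀ u v, G.Adj u v → σ u v = 1 ∨ σ u v = -1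

/-- A signed graph is balanced when every cycle has sign `+1`. -/
def IsBalanced {V : Type*} (G : SimpleGraph V) (σ : V → V → ℤ) : Prop :=
  ∀ (u : V) (p : G.Walk u u), p.IsCycle → walkSign σ p = 1

/-- A walk is a shortest path when it is a path whose length is the graph distance
between its endpoints. -/
def IsShortestPath {V : Type*} {G : SimpleGraph V} {u v : V} (p : G.Walk u v) : Prop :=
  p.IsPath ∧ p.length = G.dist u v

open scoped Classical in
/-- `σmax u v = +1` if some shortest `u v`-path is positive, `-1` otherwise. -/
noncomputable def sigmaMax {V : Type*} (G : SimpleGraph V) (σ : V → V → ℤ) (u v : V) : ℤ :=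
  if ∃ p : G.Walk u v, IsShortestPath p ∧ walkSign σ p = 1 then 1 else -1

open scoped Classical in
/-- `σmin u v = +1` if all shortest `u v`-paths are positive, `-1` otherwise. -/
noncomputable def sigmaMin {V : Type*} (G : SimpleGraph V) (σ : V → V → ℤ) (u v : V) : ℤ :=
  if ∀ p : G.Walk u v, IsShortestPath p → walkSign σ p = 1 then 1 else -1

/-- The signed distance matrix `D^max`, with `(u,v)` entry `σmax(u,v)·d(u,v)`. -/
noncomputable def Dmax {V : Type*} (G : SimpleGraph V) (σ : V → V → ℤ) : Matrix V V ℝ :=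
  Matrix.of fun u v => (sigmaMax G σ u v : ℝ) * (G.dist u v : ℝ)

/-- The signed distance matrix `D^min`, with `(u,v)` entry `σmin(u,v)·d(u,v)`. -/
noncomputable def Dmin {V : Type*} (G : SimpleGraph V) (σ : V → V → ℤ) : Matrix V V ℝ :=
  Matrix.of fun u v => (sigmaMin G σ u v : ℝ) * (G.dist u v : ℝ)

/-- Two vertices are distance-compatible if all shortest paths between them have the
same sign. -/
def Compatible {V : Type*} (G : SimpleGraph V) (σ : V → V → ℤ) (u v : V) : Prop :=
  ∀ p q : G.Walk u v, IsShortestPath p → IsShortestPath q → walkSign σ p = walkSign σ q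

/-- A signed graph is distance-compatible if every pair of vertices is
distance-compatible. -/
def IsCompatibleGraph {V : Type*} (G : SimpleGraph V) (σ : V → V → ℤ) : Prop :=
  ∀ u v, Compatible G σ u v

/-- The largest eigenvalue of a (symmetric) real matrix: the supremum of the set of real
roots of its characteristic polynomial. -/
noncomputable def largestEigenvalue {n : Type*} [Fintype n] [DecidableEq n]
    (M : Matrix n n ℝ) : ℝ :=
  sSup {x : ℝ | M.charpoly.IsRoot x}


section AuxProofs

variable {V : Type*} {G : SimpleGraph V} (σ : V → V → ℤ)

lemma walkSign_nil {u : V} : walkSign σ (Walk.nil : G.Walk u u) = 1 := rfl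

lemma walkSign_cons {u v w : V} (h : G.Adj u v) (p : G.Walk v w) :
    walkSign σ (Walk.cons h p) = σ u v * walkSign σ p := by
  simp [walkSign]

lemma walkSign_append {u v w : V} (p : G.Walk u v) (q : G.Walk v w) :
    walkSign σ (p.append q) = walkSign σ p * walkSign σ q := by
  simp [walkSign, Walk.darts_append]

lemma walkSign_concat {u v w : V} (p : G.Walk u v) (h : G.Adj v w) :
    walkSign σ (p.concat h) = walkSign σ p * σ v w := by
  simp [walkSign, Walk.darts_concat]

lemma walkSign_reverse (hsym : ∀ u v, σ u v = σ v u) {u v : V} (p : G.Walk u v) :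
    walkSign σ p.reverse = walkSign σ p := by
  rw [walkSign, Walk.darts_reverse, List.map_reverse, List.prod_reverse, List.map_map, walkSign]
  congr 1
  apply List.map_congr_left
  intro d _
  simp only [Function.comp_apply]
  exact (hsym _ _).symm ▸ by simp [SimpleGraph.Dart.symm, hsym d.toProd.1 d.toProd.2]

lemma walkSign_mul_self (hs : ∀ u v, G.Adj u v → σ u v = 1 ∨ σ u v = -1) {u v : V}
    (p : G.Walk u v) : walkSign σ p * walkSign σ p = 1 := by
  induction p with
  | nil => norm_num [walkSign_nil]
  | cons h q ih =>
    rw [walkSign_cons, mul_mul_mul_comm, ih]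
    rcases hs _ _ h with h1 | h1 <;> rw [h1] <;> norm_num

lemma walkSign_length_one {u v : V} (q : G.Walk u v) (hl : q.length = 1) :
    walkSign σ q = σ u v := by
  cases q with
  | nil => simp at hl
  | cons h r =>
    cases r with
    | nil => rw [walkSign_cons, walkSign_nil, mul_one]
    | cons h' r' => simp [Walk.length_cons] at hl

lemma path_edge_length_one {u v : V} (huv : G.Adj u v) (q : G.Walk v u)
    (hp : q.IsPath) (he : s(u, v) ∈ q.edges) : q.length = 1 := by
  cases q with
  | nil => simp at he
  | @cons _ w _ h' r =>
    rw [Walk.edges_cons, List.mem_cons] at he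
    rcases he with he | he
    · have hw : w = u := by
        rw [Sym2.eq_iff] at he
        rcases he with ⟨h1, h2⟩ | ⟨h1, h2⟩
        · exact absurd h1 huv.ne
        · exact h1.symm
      subst hw
      have : r = Walk.nil := Walk.isPath_iff_eq_nil.1 hp.of_cons
      subst this
      simp
    · have hv : v ∈ r.support := r.snd_mem_support_of_mem_edges he
      rw [Walk.cons_isPath_iff] at hp
      exact absurd hv hp.2

lemma closed_walkSign (hσ : IsSignature G σ) (hbal : IsBalanced G σ) (n : ℕ) :
    ∀ (u : V) (p : G.Walk u u), p.length ≤ n → walkSign σ p = 1 := by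
  classical
  induction n using Nat.strong_induction_on with
  | _ n ih =>
  intro u p hpn
  cases p with
  | nil => exact walkSign_nil σ
  | @cons _ v _ h q =>
    rw [Walk.length_cons] at hpn
    by_cases hq : q.IsPath
    · by_cases he : s(u, v) ∈ q.edges
      · have hl : q.length = 1 := path_edge_length_one h q hq he
        rw [walkSign_cons, walkSign_length_one σ q hl, hσ.1 v u]
        rcases hσ.2 u v h with h1 | h1 <;> rw [h1] <;> norm_num
      · exact hbal u (Walk.cons h q) ((Walk.cons_isCycle_iff q h).2 ⟨hq, he⟩)
    · rw [Walk.isPath_def] at hq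
      obtain ⟨x, hx⟩ := List.exists_duplicate_iff_not_nodup.2 hq
      have hx1 : x ∈ q.support := hx.mem
      have hcount : 2 ≤ q.support.count x := List.duplicate_iff_two_le_count.1 hx
      have hspec : (q.takeUntil x hx1).append (q.dropUntil x hx1) = q := q.take_spec hx1
      have hct : (q.takeUntil x hx1).support.count x = 1 :=
        q.count_support_takeUntil_eq_one hx1
      have hxd : x ∈ (q.dropUntil x hx1).support.tail := by
        have hsup : q.support =
            (q.takeUntil x hx1).support ++ (q.dropUntil x hx1).support.tail := by
          conv_lhs => rw [← hspec]
          exact Walk.support_append _ _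
        by_contra hcon
        have h0 : (q.dropUntil x hx1).support.tail.count x = 0 :=
          List.count_eq_zero_of_not_mem hcon
        rw [hsup, List.count_append, hct, h0] at hcount
        omega
      obtain ⟨y, h2, r, hdq⟩ : ∃ (y : V) (h2 : G.Adj x y) (r : G.Walk y u),
          q.dropUntil x hx1 = Walk.cons h2 r := by
        cases hd : q.dropUntil x hx1 with
        | nil => rw [hd] at hxd; simp at hxd
        | cons h2 r => exact ⟨_, h2, r, rfl⟩
      have hxr : x ∈ r.support := by
        rw [hdq] at hxd
        simpa using hxd
      have hrspec : (r.takeUntil x hxr).append (r.dropUntil x hxr) = r := r.take_spec hxr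
      -- length bookkeeping
      have hlq : (q.takeUntil x hx1).length + (q.dropUntil x hx1).length = q.length := by
        conv_rhs => rw [← hspec]
        exact (Walk.length_append _ _).symm
      have hld : (q.dropUntil x hx1).length = r.length + 1 := by
        rw [hdq, Walk.length_cons]
      have hlr : (r.takeUntil x hxr).length + (r.dropUntil x hxr).length = r.length := by
        conv_rhs => rw [← hrspec]
        exact (Walk.length_append _ _).symm
      -- two strictly smaller closed walks
      have hB : walkSign σ (Walk.cons h2 (r.takeUntil x hxr)) = 1 := by
        refine ih ((r.takeUntil x hxr).length + 1) (by omega) x _ ?_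
        rw [Walk.length_cons]
      have hP : walkSign σ (Walk.cons h ((q.takeUntil x hx1).append (r.dropUntil x hxr))) = 1 := by
        refine ih ((q.takeUntil x hx1).length + (r.dropUntil x hxr).length + 1) (by omega) u _ ?_
        rw [Walk.length_cons, Walk.length_append]
      rw [walkSign_cons, walkSign_append] at hP
      rw [walkSign_cons] at hB
      have hsq : walkSign σ q =
          walkSign σ (q.takeUntil x hx1) *
            (σ x y * (walkSign σ (r.takeUntil x hxr) * walkSign σ (r.dropUntil x hxr))) := by
        conv_lhs => rw [← hspec]
        rw [walkSign_append, hdq, walkSign_cons]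
        congr 1
        congr 1
        conv_lhs => rw [← hrspec]
        exact walkSign_append _ _ _
      rw [walkSign_cons, hsq]
      calc σ u v * (walkSign σ (q.takeUntil x hx1) *
            (σ x y * (walkSign σ (r.takeUntil x hxr) * walkSign σ (r.dropUntil x hxr))))
          = (σ u v * (walkSign σ (q.takeUntil x hx1) * walkSign σ (r.dropUntil x hxr))) *
            (σ x y * walkSign σ (r.takeUntil x hxr)) := by ring
        _ = 1 := by rw [hP, hB, one_mul]

lemma coloring_parity (C : G.Coloring (Fin 2)) {u v : V} (p : G.Walk u v) :
    ((C v).val : ZMod 2) = ((C u).val : ZMod 2) + p.length := by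
  induction p with
  | nil => simp
  | @cons _ w _ h q ih =>
    have hne : C _ ≠ C w := C.valid h
    have key : ∀ a b : Fin 2, a ≠ b → ((b.val : ZMod 2)) = (a.val : ZMod 2) + 1 := by decide
    rw [ih, key _ _ hne, Walk.length_cons]
    push_cast
    ring

lemma even_length_closed (C : G.Coloring (Fin 2)) {u : V} (p : G.Walk u u) :
    Even p.length := by
  have := coloring_parity C p
  have h0 : ((p.length : ℕ) : ZMod 2) = 0 := (left_eq_add.1 this)
  obtain ⟨k, hk⟩ := (ZMod.natCast_eq_zero_iff _ _).1 h0
  exact ⟨k, by omega⟩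

lemma adj_dist_ne (C : G.Coloring (Fin 2)) (hG : G.Connected) {u v : V} (r : V)
    (h : G.Adj u v) : G.dist r u ≠ G.dist r v := by
  intro heq
  obtain ⟨p, hp⟩ := hG.exists_walk_length_eq_dist r u
  obtain ⟨q, hq⟩ := hG.exists_walk_length_eq_dist r v
  have heven := even_length_closed C (p.reverse.append (q.append (Walk.cons h.symm Walk.nil)))
  rw [Walk.length_append, Walk.length_append, Walk.length_reverse, Walk.length_cons,
    Walk.length_nil, hp, hq, heq] at heven
  obtain ⟨k, hk⟩ := heven
  omega

lemma walkSign_eq_potential (μ : V → ℤ) (hμ : ∀ v, μ v * μ v = 1)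
    (hpot : ∀ u v, G.Adj u v → σ u v = μ u * μ v) {u v : V} (p : G.Walk u v) :
    walkSign σ p = μ u * μ v := by
  induction p with
  | nil => rw [walkSign_nil, hμ]
  | @cons _ w _ h q ih =>
    rw [walkSign_cons, hpot _ _ h, ih, mul_assoc, ← mul_assoc (μ w), hμ, one_mul]

lemma exists_potential (hσ : IsSignature G σ) (hG : G.Connected) (C : G.Coloring (Fin 2))
    (hcomp : IsCompatibleGraph G σ) :
    ∃ μ : V → ℤ, (∀ v, μ v * μ v = 1) ∧ ∀ u v, G.Adj u v → σ u v = μ u * μ v := by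
  obtain ⟨r⟩ := hG.nonempty
  have hpath : ∀ v : V, ∃ p : G.Walk r v, IsShortestPath p := by
    intro v
    obtain ⟨p, hp⟩ := hG.exists_walk_length_eq_dist r v
    exact ⟨p, Walk.isPath_of_length_eq_dist p hp, hp⟩
  choose P hP using hpath
  refine ⟨fun v => walkSign σ (P v), fun v => walkSign_mul_self σ hσ.2 _, ?_⟩
  have key : ∀ u v : V, ∀ h : G.Adj u v, G.dist r v = G.dist r u + 1 →
      σ u v = walkSign σ (P u) * walkSign σ (P v) := by
    intro u v h hd
    have hlen : ((P u).concat h).length = G.dist r v := by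
      rw [Walk.length_concat, (hP u).2, hd]
    have hw : IsShortestPath ((P u).concat h) :=
      ⟨Walk.isPath_of_length_eq_dist _ hlen, hlen⟩
    have hc := hcomp r v ((P u).concat h) (P v) hw (hP v)
    rw [walkSign_concat] at hc
    have h2 := walkSign_mul_self σ hσ.2 (P u)
    calc σ u v = (walkSign σ (P u) * walkSign σ (P u)) * σ u v := by rw [h2, one_mul]
      _ = walkSign σ (P u) * (walkSign σ (P u) * σ u v) := by ring
      _ = walkSign σ (P u) * walkSign σ (P v) := by rw [hc]
  intro u v h
  have hne := adj_dist_ne C hG r h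
  have h1 : G.dist r v ≤ G.dist r u + 1 := by
    have := hG.dist_triangle (u := r) (v := u) (w := v)
    rwa [dist_eq_one_iff_adj.2 h] at this
  have h2 : G.dist r u ≤ G.dist r v + 1 := by
    have := hG.dist_triangle (u := r) (v := v) (w := u)
    rwa [dist_eq_one_iff_adj.2 h.symm] at this
  rcases lt_or_gt_of_ne hne with hlt | hlt
  · exact key u v h (by omega)
  · have := key v u h.symm (by omega)
    rw [hσ.1 u v, this, mul_comm]

end AuxProofs

/-- A signed graph whose underlying simple graph is connected and
bipartite is distance-compatible if and only if it is balanced. -/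
theorem bipartite_compatible_iff_balanced {V : Type*} (G : SimpleGraph V)
    (σ : V → V → ℤ) (hσ : IsSignature G σ) (hG : G.Connected)
    (hbip : G.Colorable 2) :
    IsCompatibleGraph G σ ↔ IsBalanced G σ := by
  constructor
  · intro hcomp
    obtain ⟨C⟩ := hbip
    obtain ⟨μ, hμ, hpot⟩ := exists_potential σ hσ hG C hcomp
    intro u p _
    rw [walkSign_eq_potential σ μ hμ hpot p]
    exact hμ u
  · intro hbal u v p q hp hq
    have h1 : walkSign σ (p.append q.reverse) = 1 :=
      closed_walkSign σ hσ hbal _ u _ le_rfl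
    rw [walkSign_append, walkSign_reverse σ hσ.1] at h1
    have h2 := walkSign_mul_self σ hσ.2 q
    calc walkSign σ p = walkSign σ p * (walkSign σ q * walkSign σ q) := by rw [h2, mul_one]
      _ = (walkSign σ p * walkSign σ q) * walkSign σ q := by ring
      _ = walkSign σ q := by rw [h1, one_mul]
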